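/- Let G = (S, E) be any subgraph of the full excitation graph and let t : Ξ(G) → ℝ be finitely supported. Then the cluster operator T = Σ_{α ∈ Ξ(G)} t_α X_α(G) : ℱ → ℱ satisfies T^{N+1} = 0. -/
import Mathlib


open Finset

namespace CC

variable {Λ : Type*} [LinearOrder Λ]

/-- The occupied part of `α` with respect to the reference state `ref`. -/
def occ (ref α : Finset Λ) : Finset Λ := α ∩ ref

/-- The virtual part of `α` with respect to the reference state `ref`. -/
def virt (ref α : Finset Λ) : Finset Λ := α \ ref

/-- The join operation `α ∨ β = (occ α ∩ occ β) ∪ (virt α ∪ virt β)`. -/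
def exJoin (ref α β : Finset Λ) : Finset Λ :=
  (occ ref α ∩ occ ref β) ∪ (virt ref α ∪ virt ref β)

/-- The meet operation `α ∧ β = (occ α ∪ occ β) ∪ (virt α ∩ virt β)`. -/
def exMeet (ref α β : Finset Λ) : Finset Λ :=
  (occ ref α ∪ occ ref β) ∪ (virt ref α ∩ virt ref β)

/-- The rank `rk α = |virt α|`. -/
def rk (ref α : Finset Λ) : ℕ := (virt ref α).card

/-- The sign `σ(α, β)`, given here in terms of the virtual parts `X = virt α`,
`Y = virt β`: the sign of the permutation sorting into increasing order the concatenation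
of the increasing enumeration of `Y` followed by that of `X`. -/
noncomputable def sgn (X Y : Finset Λ) : ℤ :=
  ((Equiv.Perm.sign
      (Tuple.sort fun i => (Y.sort (· ≤ ·) ++ X.sort (· ≤ ·)).get i) : ℤˣ) : ℤ)

/-- The set `S` of states, realized as the subtype of card-`N` finite subsets of `Λ`. -/
abbrev State (Λ : Type*) [LinearOrder Λ] (N : ℕ) := {α : Finset Λ // α.card = N}

/-- The free real vector space `ℱ` on the set of states: finitely supported functions
`S → ℝ`. -/
abbrev FS (Λ : Type*) [LinearOrder Λ] (N : ℕ) := State Λ N →₀ ℝ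

/-- The standard basis vector `Φ_β` of `ℱ`. -/
noncomputable def Phi {N : ℕ} (β : State Λ N) : FS Λ N := Finsupp.single β 1

/-- The edge set `E^full` of the full excitation graph, as a set of pairs of states:
`(β, γ) ∈ E^full` iff `γ = α ∨ β` for some `α ∈ S`, `α ≠ ref`, with `(α, β) ∈ 𝓛`,
i.e. `|occ α ∪ occ β| = N` and `virt α ∩ virt β = ∅`. -/
def EFullS (ref : Finset Λ) (N : ℕ) : Set (State Λ N × State Λ N) :=
  {e | ∃ α : Finset Λ, α.card = N ∧ (occ ref α ∪ occ ref e.1.1).card = N ∧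
    virt ref α ∩ virt ref e.1.1 = ∅ ∧ α ≠ ref ∧ e.2.1 = exJoin ref α e.1.1}

/-- The set of excitations `Ξ(G)` of a subgraph `G` with edge set `E`:
those `α ∈ S \ {ref}` which label at least one edge of `E`. -/
def XiSet (ref : Finset Λ) {N : ℕ} (E : Set (State Λ N × State Λ N)) : Set (Finset Λ) :=
  {α | α.card = N ∧ α ≠ ref ∧ ∃ β γ : State Λ N, γ.1 = exJoin ref α β.1 ∧ (β, γ) ∈ E}

open scoped Classical in
/-- The excitation operator `X_α(G)` on the subgraph with edge set `E`: the linear map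
`ℱ → ℱ` with `X_α(G) Φ_β = σ(α, β) Φ_{α ∨ β}` if `(β, α ∨ β) ∈ E` and `0` otherwise. -/
noncomputable def exOp (ref : Finset Λ) {N : ℕ}
    (E : Set (State Λ N × State Λ N)) (α : Finset Λ) :
    FS Λ N →ₗ[ℝ] FS Λ N :=
  Finsupp.lsum ℝ fun β =>
    if h : ∃ γ : State Λ N, γ.1 = exJoin ref α β.1 ∧ (β, γ) ∈ E then
      ((sgn (virt ref α) (virt ref β.1) : ℤ) : ℝ) • Finsupp.lsingle h.choose
    else 0

/-- A subgraph (given by its edge set `E`) is consistent if `E ⊆ E^full` and whenever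
`(β, α ∨ β) ∈ E` for some `β ∈ S`, then `(β', α ∨ β') ∈ E` for every `β' ∈ S` with
`(β', α ∨ β') ∈ E^full`. -/
def Consistent (ref : Finset Λ) {N : ℕ} (E : Set (State Λ N × State Λ N)) : Prop :=
  E ⊆ EFullS ref N ∧
  ∀ (α : Finset Λ) (β γ β' γ' : State Λ N),
    γ.1 = exJoin ref α β.1 → (β, γ) ∈ E →
    γ'.1 = exJoin ref α β'.1 → (β', γ') ∈ EFullS ref N → (β', γ') ∈ E

/-- For any subgraph `G = (S, E)` of the full excitation graph and any
finitely supported `t : Ξ(G) → ℝ`, the cluster operator `T = Σ_{α ∈ Ξ(G)} t_α X_α(G)`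
satisfies `T^{N+1} = 0`. -/
theorem clusterOp_nilpotent (ref : Finset Λ) (N : ℕ)
    (hN : 1 ≤ N) (hord : ∀ x ∈ ref, ∀ y ∉ ref, x < y) (href : ref.card = N)
    (E : Set (State Λ N × State Λ N)) (hE : E ⊆ EFullS ref N)
    (t : Finset Λ →₀ ℝ) (ht : ∀ α ∈ t.support, α ∈ XiSet ref E) :
    (t.sum fun α c => c • exOp ref E α : Module.End ℝ (FS Λ N)) ^ (N + 1) = 0 := by
  classical
  set T : Module.End ℝ (FS Λ N) := t.sum fun α c => c • exOp ref E α with hT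
  -- rank increases strictly along edges
  have hrk : ∀ β γ : State Λ N, (β, γ) ∈ E → rk ref β.1 + 1 ≤ rk ref γ.1 := by
    intro β γ hbg
    obtain ⟨α₀, hcard, hocc, hdisj, hne, heq⟩ := hE hbg
    have hγv : virt ref γ.1 = virt ref α₀ ∪ virt ref β.1 := by
      rw [heq]
      ext x
      simp only [exJoin, occ, virt, Finset.mem_sdiff, Finset.mem_union, Finset.mem_inter]
      tauto
    have hdisj' : Disjoint (virt ref α₀) (virt ref β.1) :=
      Finset.disjoint_iff_inter_eq_empty.2 hdisj
    have h1 : 1 ≤ rk ref α₀ := by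
      rcases Nat.eq_zero_or_pos (rk ref α₀) with h | h
      · exfalso
        have h0 : virt ref α₀ = ∅ := Finset.card_eq_zero.1 h
        have hsub : α₀ ⊆ ref := by
          rwa [virt, Finset.sdiff_eq_empty_iff_subset] at h0
        exact hne (Finset.eq_of_subset_of_card_le hsub (by omega))
      · exact h
    have hsum : rk ref γ.1 = rk ref α₀ + rk ref β.1 := by
      simp [rk, hγv, Finset.card_union_of_disjoint hdisj']
    omega
  -- support of exOp
  have hsup : ∀ (α : Finset Λ) (f : FS Λ N) (γ : State Λ N),
      γ ∈ (exOp ref E α f).support → ∃ β ∈ f.support, (β, γ) ∈ E := by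
    intro α f γ hγ
    rw [exOp, Finsupp.lsum_apply] at hγ
    obtain ⟨β, hβ, hγ'⟩ := Finset.mem_biUnion.1 (Finsupp.support_sum hγ)
    refine ⟨β, hβ, ?_⟩
    by_cases h : ∃ γ' : State Λ N, γ'.1 = exJoin ref α β.1 ∧ (β, γ') ∈ E
    · rw [dif_pos h] at hγ'
      simp only [LinearMap.smul_apply, Finsupp.lsingle_apply, Finsupp.smul_single] at hγ'
      have := Finsupp.support_single_subset hγ'
      rw [Finset.mem_singleton] at this
      rw [this]
      exact h.choose_spec.2
    · rw [dif_neg h] at hγ'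
      simp at hγ'
  -- support of T f
  have hstep : ∀ (f : FS Λ N) (γ : State Λ N), γ ∈ (T f).support →
      ∃ β ∈ f.support, rk ref β.1 + 1 ≤ rk ref γ.1 := by
    intro f γ hγ
    have hTf : T f = ∑ α ∈ t.support, t α • exOp ref E α f := by
      simp [hT, Finsupp.sum, LinearMap.sum_apply, LinearMap.smul_apply]
    rw [hTf] at hγ
    obtain ⟨α, hα, hγ'⟩ := Finset.mem_biUnion.1 (Finsupp.support_finset_sum hγ)
    have hγ'' : γ ∈ (exOp ref E α f).support := Finsupp.support_smul hγ'
    obtain ⟨β, hβ, hEe⟩ := hsup α f γ hγ''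
    exact ⟨β, hβ, hrk β γ hEe⟩
  -- iterate
  have key : ∀ (m : ℕ) (f : FS Λ N) (γ : State Λ N), γ ∈ ((T ^ m) f).support →
      ∃ β ∈ f.support, rk ref β.1 + m ≤ rk ref γ.1 := by
    intro m
    induction m with
    | zero =>
      intro f γ h
      exact ⟨γ, by simpa using h, by omega⟩
    | succ m ih =>
      intro f γ hγ
      rw [pow_succ, Module.End.mul_apply] at hγ
      obtain ⟨β, hβ, hle⟩ := ih (T f) γ hγ
      obtain ⟨β', hβ', hle'⟩ := hstep f β hβ
      exact ⟨β', hβ', by omega⟩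
  have hzero : ∀ f : FS Λ N, (T ^ (N + 1)) f = 0 := by
    intro f
    rw [← Finsupp.support_eq_empty, Finset.eq_empty_iff_forall_notMem]
    intro γ hγ
    obtain ⟨β, hβ, hle⟩ := key (N + 1) f γ hγ
    have hbd : rk ref γ.1 ≤ N := by
      have h := Finset.card_le_card (Finset.sdiff_subset : γ.1 \ ref ⊆ γ.1)
      simpa [rk, virt, γ.2] using h
    omega
  exact LinearMap.ext hzero

end CC
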